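/- Let P(x_1,…,x_d) be a polynomial such that for every subset X ⊆ {1,…,d} the monomial ∏_{j∈X} x_j has a strictly positive coefficient, while every other monomial has zero coefficient, and let K(t) := log P(e^{t_1},…,e^{t_d}). Then: (i) P has full rank; (ii) P is aperiodic; (iii) for every λ ∈ (0,1)^d, the function t ↦ K(t) − λ^T t tends to +∞ as t tends to any boundary point of [−∞,+∞]^d; and (iv) consequently there exists a unique τ ∈ ℝ^d at which the gradient of t ↦ K(t) − λ^T t vanishes. -/

import Mathlib

open scoped BigOperators Topology

namespace PaperStmt

variable {d : ℕ}

/-- `P` has full rank: the differences of support vectors span `ℝ^d`. -/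
def FullRank (P : MvPolynomial (Fin d) ℝ) : Prop :=
  Submodule.span ℝ
    {v : Fin d → ℝ | ∃ n m : Fin d →₀ ℕ,
      P.coeff n ≠ 0 ∧ P.coeff m ≠ 0 ∧
      v = fun j => (n j : ℝ) - (m j : ℝ)} = ⊤

/-- `P` is `q`-periodic. -/
def QPeriodic (P : MvPolynomial (Fin d) ℝ) (q : ℕ) : Prop :=
  ∃ p : Fin d → ℕ, (¬ ∀ j, q ∣ p j) ∧ ∃ r : ℤ,
    ∀ n : Fin d →₀ ℕ, P.coeff n ≠ 0 →
      ∃ k : ℕ, (∑ j, (p j : ℤ) * (n j : ℤ)) = r + q * k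

/-- `P` is aperiodic if it is not `q`-periodic for any `q ≥ 2`. -/
def Aperiodic (P : MvPolynomial (Fin d) ℝ) : Prop :=
  ∀ q : ℕ, 2 ≤ q → ¬ QPeriodic P q

end PaperStmt

open PaperStmt


namespace SqAux
open Filter Finset
variable {d : ℕ}

noncomputable def expSum (P : MvPolynomial (Fin d) ℝ) (t : Fin d → ℝ) : ℝ :=
  ∑ n ∈ P.support, P.coeff n * Real.exp (∑ j, (n j : ℝ) * t j)

theorem eval_exp (P : MvPolynomial (Fin d) ℝ) (t : Fin d → ℝ) :
    MvPolynomial.eval (fun j => Real.exp (t j)) P = expSum P t := by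
  rw [MvPolynomial.eval_eq, expSum]
  refine Finset.sum_congr rfl fun n hn => ?_
  congr 1
  rw [show (∏ i ∈ n.support, Real.exp (t i) ^ n i) = ∏ i : Fin d, Real.exp (t i) ^ n i from
    Finset.prod_subset (Finset.subset_univ n.support)
      (by intro x _ hx; simp [Finsupp.notMem_support_iff.mp hx])]
  rw [Real.exp_sum]
  exact Finset.prod_congr rfl fun j _ => by rw [mul_comm, ← Real.exp_nat_mul, mul_comm]

noncomputable def Lc (c : Fin d → ℝ) : (Fin d → ℝ) →L[ℝ] ℝ :=
  ∑ j, c j • (ContinuousLinearMap.proj j : ((Fin d → ℝ)) →L[ℝ] ℝ)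

theorem Lc_apply (c t : Fin d → ℝ) : Lc c t = ∑ j, c j * t j := by
  simp [Lc, ContinuousLinearMap.sum_apply, ContinuousLinearMap.proj_apply, smul_eq_mul]

theorem hasFDerivAt_Lc (c t : Fin d → ℝ) :
    HasFDerivAt (fun t : Fin d → ℝ => ∑ j, c j * t j) (Lc c) t := by
  have := (Lc c).hasFDerivAt (x := t)
  have he : ⇑(Lc c) = fun t : Fin d → ℝ => ∑ j, c j * t j := funext fun t => Lc_apply c t
  rwa [he] at this

theorem hasFDerivAt_term (a : ℝ) (c t : Fin d → ℝ) :
    HasFDerivAt (fun t : Fin d → ℝ => a * Real.exp (∑ j, c j * t j))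
      ((a * Real.exp (∑ j, c j * t j)) • Lc c) t := by
  have h1 : HasFDerivAt (fun t : Fin d → ℝ => Real.exp (∑ j, c j * t j))
      (Real.exp (∑ j, c j * t j) • Lc c) t :=
    (Real.hasDerivAt_exp _).comp_hasFDerivAt t (hasFDerivAt_Lc c t)
  have := h1.const_mul a
  rwa [smul_smul] at this

noncomputable def DE (P : MvPolynomial (Fin d) ℝ) (t : Fin d → ℝ) : (Fin d → ℝ) →L[ℝ] ℝ :=
  ∑ n ∈ P.support, (P.coeff n * Real.exp (∑ j, (n j : ℝ) * t j)) • Lc (fun j => (n j : ℝ))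

theorem hasFDerivAt_expSum (P : MvPolynomial (Fin d) ℝ) (t : Fin d → ℝ) :
    HasFDerivAt (expSum P) (DE P t) t := by
  have : HasFDerivAt (fun t : Fin d → ℝ => ∑ n ∈ P.support,
      P.coeff n * Real.exp (∑ j, (n j : ℝ) * t j)) (DE P t) t :=
    HasFDerivAt.fun_sum (fun n _ => hasFDerivAt_term (P.coeff n) (fun j => (n j : ℝ)) t)
  exact this

noncomputable def DG (P : MvPolynomial (Fin d) ℝ) (lam : Fin d → ℝ) (t : Fin d → ℝ) :
    (Fin d → ℝ) →L[ℝ] ℝ :=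
  (expSum P t)⁻¹ • DE P t - Lc lam

theorem hasFDerivAt_G (P : MvPolynomial (Fin d) ℝ) (lam : Fin d → ℝ) (t : Fin d → ℝ)
    (hE : expSum P t ≠ 0) :
    HasFDerivAt (fun t => Real.log (expSum P t) - ∑ j, lam j * t j) (DG P lam t) t := by
  have h1 : HasFDerivAt (fun t : Fin d → ℝ => Real.log (expSum P t))
      ((expSum P t)⁻¹ • DE P t) t := by
    have := (Real.hasDerivAt_log hE).comp_hasFDerivAt t (hasFDerivAt_expSum P t)
    exact this
  exact h1.sub (hasFDerivAt_Lc lam t)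


section Psi
variable (P : MvPolynomial (Fin d) ℝ) (τ v : Fin d → ℝ)

noncomputable def BB (n : Fin d →₀ ℕ) : ℝ := ∑ j, (n j : ℝ) * v j
noncomputable def AA (n : Fin d →₀ ℕ) : ℝ := ∑ j, (n j : ℝ) * τ j

noncomputable def psi (k : ℕ) (s : ℝ) : ℝ :=
  ∑ n ∈ P.support, P.coeff n * (BB v n) ^ k * Real.exp (AA τ n + s * BB v n)

theorem lin_line (n : Fin d →₀ ℕ) (s : ℝ) :
    (∑ j, (n j : ℝ) * (τ + s • v) j) = AA τ n + s * BB v n := by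
  rw [AA, BB, Finset.mul_sum, ← Finset.sum_add_distrib]
  exact Finset.sum_congr rfl fun j _ => by simp [Pi.add_apply, Pi.smul_apply, smul_eq_mul]; ring

theorem expSum_line (s : ℝ) : expSum P (τ + s • v) = psi P τ v 0 s := by
  rw [expSum, psi]
  exact Finset.sum_congr rfl fun n _ => by rw [lin_line, pow_zero, mul_one]

theorem DE_line (s : ℝ) : DE P (τ + s • v) v = psi P τ v 1 s := by
  rw [DE, psi, ContinuousLinearMap.sum_apply]
  refine Finset.sum_congr rfl fun n _ => ?_
  rw [ContinuousLinearMap.smul_apply, Lc_apply, smul_eq_mul, lin_line]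
  rw [show (∑ j, (n j : ℝ) * v j) = BB v n from rfl, pow_one]
  ring

theorem hasDerivAt_psi (k : ℕ) (s : ℝ) :
    HasDerivAt (psi P τ v k) (psi P τ v (k + 1) s) s := by
  rw [show psi P τ v (k+1) s = ∑ n ∈ P.support,
      (P.coeff n * (BB v n) ^ k) * (BB v n) * Real.exp (AA τ n + s * BB v n) from
    Finset.sum_congr rfl fun n _ => by rw [pow_succ]; ring]
  refine HasDerivAt.fun_sum fun n _ => ?_
  have h1 : HasDerivAt (fun s : ℝ => AA τ n + s * BB v n) (BB v n) s := by
    simpa using ((hasDerivAt_id s).mul_const (BB v n)).const_add (AA τ n)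
  have := (h1.exp).const_mul (P.coeff n * (BB v n) ^ k)
  convert this using 1
  · rfl
  · ring

end Psi

section Supp
variable {P : MvPolynomial (Fin d) ℝ}
variable (hpos : ∀ n : Fin d →₀ ℕ, (∀ j, n j ≤ 1) → 0 < P.coeff n)
variable (hzero : ∀ n : Fin d →₀ ℕ, ¬ (∀ j, n j ≤ 1) → P.coeff n = 0)
include hpos

theorem single_coeff_pos (j : Fin d) : 0 < P.coeff (Finsupp.single j 1) :=
  hpos _ (fun i => by rw [Finsupp.single_apply]; split <;> simp)

theorem zero_coeff_pos : 0 < P.coeff 0 := hpos 0 (fun i => by simp)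

include hzero in
theorem coeff_pos_of_mem {n : Fin d →₀ ℕ} (hn : n ∈ P.support) : 0 < P.coeff n := by
  by_cases h : ∀ j, n j ≤ 1
  · exact hpos n h
  · exact absurd (hzero n h) (MvPolynomial.mem_support_iff.mp hn)

include hzero in
theorem term_le_expSum {n : Fin d →₀ ℕ} (hn : n ∈ P.support) (t : Fin d → ℝ) :
    P.coeff n * Real.exp (∑ j, (n j : ℝ) * t j) ≤ expSum P t := by
  rw [expSum]
  exact Finset.single_le_sum (f := fun m => P.coeff m * Real.exp (∑ j, (m j : ℝ) * t j))
    (fun m hm => le_of_lt (mul_pos (coeff_pos_of_mem hpos hzero hm) (Real.exp_pos _))) hn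

include hzero in
theorem expSum_pos (t : Fin d → ℝ) : 0 < expSum P t :=
  lt_of_lt_of_le (mul_pos (zero_coeff_pos hpos) (Real.exp_pos _))
    (by
      show MvPolynomial.coeff 0 P * Real.exp 0 ≤ expSum P t
      have h0 : (0 : Fin d →₀ ℕ) ∈ P.support :=
        MvPolynomial.mem_support_iff.mpr (ne_of_gt (zero_coeff_pos hpos))
      have h := term_le_expSum hpos hzero h0 t
      calc MvPolynomial.coeff 0 P * Real.exp 0
          = MvPolynomial.coeff 0 P * Real.exp (∑ j, ((0 : Fin d →₀ ℕ) j : ℝ) * t j) := by simp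
        _ ≤ expSum P t := h)

omit hpos in
theorem BB_single (v : Fin d → ℝ) (j : Fin d) : BB v (Finsupp.single j 1) = v j := by
  rw [BB, Finset.sum_eq_single j]
  · simp
  · intro i _ hij; simp [Finsupp.single_apply, Ne.symm hij]
  · simp

include hzero in
theorem num_pos (τ v : Fin d → ℝ) (s : ℝ) (hv : ∃ j, v j ≠ 0) :
    0 < psi P τ v 2 s * psi P τ v 0 s - psi P τ v 1 s * psi P τ v 1 s := by
  classical
  obtain ⟨j, hj⟩ := hv
  set S := P.support with hS
  set w : (Fin d →₀ ℕ) → ℝ := fun n => P.coeff n * Real.exp (AA τ n + s * BB v n) with hw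
  have hwpos : ∀ n ∈ S, 0 < w n := fun n hn =>
    mul_pos (coeff_pos_of_mem hpos hzero hn) (Real.exp_pos _)
  set a : (Fin d →₀ ℕ) → ℝ := fun n => w n * BB v n ^ 2 with ha
  set b : (Fin d →₀ ℕ) → ℝ := fun n => w n with hb
  set c : (Fin d →₀ ℕ) → ℝ := fun n => w n * BB v n with hc
  have hpsi2 : psi P τ v 2 s = ∑ n ∈ S, a n :=
    Finset.sum_congr rfl fun n _ => by rw [ha, hw]; ring
  have hpsi0 : psi P τ v 0 s = ∑ n ∈ S, b n :=
    Finset.sum_congr rfl fun n _ => by rw [hb, hw]; ring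
  have hpsi1 : psi P τ v 1 s = ∑ n ∈ S, c n :=
    Finset.sum_congr rfl fun n _ => by rw [hc, hw]; ring
  have expand : ∀ f g : (Fin d →₀ ℕ) → ℝ,
      (∑ n ∈ S, f n) * (∑ m ∈ S, g m) = ∑ p ∈ S ×ˢ S, f p.1 * g p.2 := by
    intro f g; rw [Finset.sum_mul_sum, Finset.sum_product]
  have key : 2 * (psi P τ v 2 s * psi P τ v 0 s - psi P τ v 1 s * psi P τ v 1 s)
      = ∑ p ∈ S ×ˢ S, w p.1 * w p.2 * (BB v p.1 - BB v p.2) ^ 2 := by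
    rw [hpsi2, hpsi0, hpsi1]
    have h1 := expand a b
    have h2 := expand b a
    have h3 := expand c c
    calc 2 * ((∑ n ∈ S, a n) * (∑ n ∈ S, b n) - (∑ n ∈ S, c n) * (∑ n ∈ S, c n))
        = (∑ n ∈ S, a n) * (∑ m ∈ S, b m) + (∑ n ∈ S, b n) * (∑ m ∈ S, a m)
          - 2 * ((∑ n ∈ S, c n) * (∑ m ∈ S, c m)) := by ring
      _ = (∑ p ∈ S ×ˢ S, a p.1 * b p.2) + (∑ p ∈ S ×ˢ S, b p.1 * a p.2)
          - 2 * ∑ p ∈ S ×ˢ S, c p.1 * c p.2 := by rw [h1, h2, h3]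
      _ = ∑ p ∈ S ×ˢ S, (a p.1 * b p.2 + b p.1 * a p.2 - 2 * (c p.1 * c p.2)) := by
          rw [Finset.mul_sum, ← Finset.sum_add_distrib, ← Finset.sum_sub_distrib]
      _ = ∑ p ∈ S ×ˢ S, w p.1 * w p.2 * (BB v p.1 - BB v p.2) ^ 2 := by
          refine Finset.sum_congr rfl fun p _ => ?_
          rw [ha, hb, hc]; ring
  have hmem1 : (Finsupp.single j 1 : Fin d →₀ ℕ) ∈ S :=
    MvPolynomial.mem_support_iff.mpr (ne_of_gt (single_coeff_pos hpos j))
  have hmem0 : (0 : Fin d →₀ ℕ) ∈ S :=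
    MvPolynomial.mem_support_iff.mpr (ne_of_gt (zero_coeff_pos hpos))
  have hpossum : 0 < ∑ p ∈ S ×ˢ S, w p.1 * w p.2 * (BB v p.1 - BB v p.2) ^ 2 := by
    refine Finset.sum_pos' (fun p hp => ?_) ?_
    · rw [Finset.mem_product] at hp
      exact mul_nonneg (mul_nonneg (le_of_lt (hwpos _ hp.1)) (le_of_lt (hwpos _ hp.2)))
        (sq_nonneg _)
    · refine ⟨(Finsupp.single j 1, 0), Finset.mem_product.mpr ⟨hmem1, hmem0⟩, ?_⟩
      have hBB0 : BB v (0 : Fin d →₀ ℕ) = 0 := by simp [BB]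
      show 0 < w (Finsupp.single j 1) * w 0 * (BB v (Finsupp.single j 1) - BB v 0) ^ 2
      rw [BB_single v j, hBB0, sub_zero]
      exact mul_pos (mul_pos (hwpos _ hmem1) (hwpos _ hmem0)) (by positivity)
  linarith

end Supp

section W2
variable {P : MvPolynomial (Fin d) ℝ}
variable (hpos : ∀ n : Fin d →₀ ℕ, (∀ j, n j ≤ 1) → 0 < P.coeff n)
variable (hzero : ∀ n : Fin d →₀ ℕ, ¬ (∀ j, n j ≤ 1) → P.coeff n = 0)

noncomputable def Wfun (P : MvPolynomial (Fin d) ℝ) (lam τ v : Fin d → ℝ) (s : ℝ) : ℝ :=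
  psi P τ v 1 s / psi P τ v 0 s - ∑ j, lam j * v j

include hpos hzero

theorem psi0_pos (τ v : Fin d → ℝ) (s : ℝ) : 0 < psi P τ v 0 s := by
  rw [← expSum_line]; exact expSum_pos hpos hzero _

theorem hasDerivAt_W (lam τ v : Fin d → ℝ) (s : ℝ) :
    HasDerivAt (Wfun P lam τ v)
      ((psi P τ v 2 s * psi P τ v 0 s - psi P τ v 1 s * psi P τ v 1 s) / (psi P τ v 0 s) ^ 2)
      s :=
  ((hasDerivAt_psi P τ v 1 s).div (hasDerivAt_psi P τ v 0 s)
    (ne_of_gt (psi0_pos hpos hzero τ v s))).sub_const _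

theorem strictMono_W (lam τ v : Fin d → ℝ) (hv : ∃ j, v j ≠ 0) :
    StrictMono (Wfun P lam τ v) :=
  strictMono_of_deriv_pos fun s => by
    rw [(hasDerivAt_W hpos hzero lam τ v s).deriv]
    exact div_pos (num_pos hpos hzero τ v s hv) (pow_pos (psi0_pos hpos hzero τ v s) 2)

omit hpos hzero in
theorem W_eq_DG (lam τ v : Fin d → ℝ) (s : ℝ) :
    Wfun P lam τ v s = DG P lam (τ + s • v) v := by
  rw [Wfun, DG, ContinuousLinearMap.sub_apply, ContinuousLinearMap.smul_apply, Lc_apply,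
    DE_line, expSum_line, smul_eq_mul, div_eq_inv_mul]

theorem DG_eq_zero (lam τ : Fin d → ℝ)
    (h : ∀ j, fderiv ℝ (fun t : Fin d → ℝ => Real.log (expSum P t) - ∑ i, lam i * t i) τ
      (Pi.single j 1) = 0) (v : Fin d → ℝ) : DG P lam τ v = 0 := by
  have hf : fderiv ℝ (fun t : Fin d → ℝ => Real.log (expSum P t) - ∑ i, lam i * t i) τ
      = DG P lam τ :=
    (hasFDerivAt_G P lam τ (ne_of_gt (expSum_pos hpos hzero τ))).fderiv
  rw [hf] at h
  have hv : v = ∑ j, Pi.single j (v j) := (Finset.univ_sum_single v).symm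
  rw [hv, map_sum]
  refine Finset.sum_eq_zero fun j _ => ?_
  have : Pi.single j (v j) = (v j) • (Pi.single j (1:ℝ) : Fin d → ℝ) := by
    rw [← Pi.single_smul, smul_eq_mul, mul_one]
  rw [this, map_smul, h j, smul_zero]

theorem unique_crit (lam τ₁ τ₂ : Fin d → ℝ)
    (h1 : ∀ j, fderiv ℝ (fun t : Fin d → ℝ => Real.log (expSum P t) - ∑ i, lam i * t i) τ₁
      (Pi.single j 1) = 0)
    (h2 : ∀ j, fderiv ℝ (fun t : Fin d → ℝ => Real.log (expSum P t) - ∑ i, lam i * t i) τ₂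
      (Pi.single j 1) = 0) : τ₁ = τ₂ := by
  by_contra hne
  set v : Fin d → ℝ := τ₂ - τ₁ with hvdef
  have hv : ∃ j, v j ≠ 0 := by
    by_contra h
    push_neg at h
    exact hne (funext fun j => by
      have := h j
      rw [hvdef, Pi.sub_apply, sub_eq_zero] at this
      exact this.symm)
  have hW := strictMono_W hpos hzero lam τ₁ v hv (show (0:ℝ) < 1 by norm_num)
  have hW0 : Wfun P lam τ₁ v 0 = 0 := by
    rw [W_eq_DG]
    have : τ₁ + (0:ℝ) • v = τ₁ := by simp
    rw [this, DG_eq_zero hpos hzero lam τ₁ h1 v]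
  have hW1 : Wfun P lam τ₁ v 1 = 0 := by
    rw [W_eq_DG]
    have : τ₁ + (1:ℝ) • v = τ₂ := by rw [one_smul, hvdef]; abel
    rw [this, DG_eq_zero hpos hzero lam τ₂ h2 v]
  rw [hW0, hW1] at hW
  exact lt_irrefl 0 hW

end W2

noncomputable def ind (X : Finset (Fin d)) : Fin d →₀ ℕ := ∑ j ∈ X, Finsupp.single j 1

theorem ind_apply (X : Finset (Fin d)) (i : Fin d) :
    ind X i = if i ∈ X then 1 else 0 := by
  classical
  rw [ind, Finset.sum_apply']
  simp [Finsupp.single_apply, Finset.sum_ite_eq X i (fun _ => 1)]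

section Exist
variable {P : MvPolynomial (Fin d) ℝ}
variable (hpos : ∀ n : Fin d →₀ ℕ, (∀ j, n j ≤ 1) → 0 < P.coeff n)
variable (hzero : ∀ n : Fin d →₀ ℕ, ¬ (∀ j, n j ≤ 1) → P.coeff n = 0)
include hpos

theorem ind_coeff_pos (X : Finset (Fin d)) : 0 < P.coeff (ind X) :=
  hpos _ (fun j => by rw [ind_apply]; split <;> simp)

theorem ind_mem (X : Finset (Fin d)) : ind X ∈ P.support :=
  MvPolynomial.mem_support_iff.mpr (ne_of_gt (ind_coeff_pos hpos X))

include hzero in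
theorem log_lower (X : Finset (Fin d)) (lam : Fin d → ℝ) (t : Fin d → ℝ) :
    Real.log (P.coeff (ind X)) + ∑ j, ((if j ∈ X then 1 else 0) - lam j) * t j ≤
      Real.log (expSum P t) - ∑ j, lam j * t j := by
  have h1 : Real.log (P.coeff (ind X)) + ∑ j, (if j ∈ X then (1:ℝ) else 0) * t j ≤
      Real.log (expSum P t) := by
    have := term_le_expSum hpos hzero (ind_mem hpos X) t
    have h2 := Real.log_le_log (mul_pos (ind_coeff_pos hpos X) (Real.exp_pos _)) this
    rw [Real.log_mul (ne_of_gt (ind_coeff_pos hpos X)) (ne_of_gt (Real.exp_pos _)),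
      Real.log_exp] at h2
    convert h2 using 2
    exact Finset.sum_congr rfl fun j _ => by rw [ind_apply]; split <;> simp
  have : ∑ j, ((if j ∈ X then (1:ℝ) else 0) - lam j) * t j
      = (∑ j, (if j ∈ X then (1:ℝ) else 0) * t j) - ∑ j, lam j * t j := by
    rw [← Finset.sum_sub_distrib]; exact Finset.sum_congr rfl fun j _ => by ring
  linarith

include hzero in
theorem exists_crit (hd : 0 < d) (lam : Fin d → ℝ) (hlam : ∀ j, lam j ∈ Set.Ioo (0:ℝ) 1) :
    ∃ τ : Fin d → ℝ,
      ∀ j, fderiv ℝ (fun t : Fin d → ℝ => Real.log (expSum P t) - ∑ i, lam i * t i) τ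
        (Pi.single j 1) = 0 := by
  classical
  haveI : Nonempty (Fin d) := ⟨⟨0, hd⟩⟩
  set G : (Fin d → ℝ) → ℝ := fun t => Real.log (expSum P t) - ∑ i, lam i * t i with hG
  have hdiff : Differentiable ℝ G := fun t =>
    (hasFDerivAt_G P lam t (ne_of_gt (expSum_pos hpos hzero t))).differentiableAt
  have hcont : Continuous G := hdiff.continuous
  set ε : ℝ := Finset.univ.inf' Finset.univ_nonempty (fun j => min (lam j) (1 - lam j))
    with hε
  have hεpos : 0 < ε := by
    rw [hε, Finset.lt_inf'_iff]
    intro j _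
    exact lt_min (hlam j).1 (by linarith [(hlam j).2])
  have hεle : ∀ j, ε ≤ lam j ∧ ε ≤ 1 - lam j := fun j =>
    ⟨le_trans (Finset.inf'_le _ (Finset.mem_univ j)) (min_le_left _ _),
     le_trans (Finset.inf'_le _ (Finset.mem_univ j)) (min_le_right _ _)⟩
  set m : ℝ := Finset.univ.inf' Finset.univ_nonempty
    (fun X : Finset (Fin d) => Real.log (P.coeff (ind X))) with hm
  have hmle : ∀ X : Finset (Fin d), m ≤ Real.log (P.coeff (ind X)) := fun X =>
    Finset.inf'_le _ (Finset.mem_univ X)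
  have coercive : ∀ t : Fin d → ℝ, m + ε * ∑ j, |t j| ≤ G t := by
    intro t
    set X : Finset (Fin d) := Finset.univ.filter (fun j => 0 ≤ t j) with hX
    have h1 := log_lower hpos hzero X lam t
    have h2 : ε * ∑ j, |t j| ≤ ∑ j, ((if j ∈ X then 1 else 0) - lam j) * t j := by
      rw [Finset.mul_sum]
      refine Finset.sum_le_sum fun j _ => ?_
      by_cases hj : 0 ≤ t j
      · have hjX : j ∈ X := by rw [hX]; simp [hj]
        rw [if_pos hjX, abs_of_nonneg hj]
        nlinarith [(hεle j).2]
      · have hjX : j ∉ X := by rw [hX]; simp [hj]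
        rw [if_neg hjX, abs_of_neg (not_le.mp hj)]
        nlinarith [(hεle j).1, not_le.mp hj]
    calc m + ε * ∑ j, |t j|
        ≤ Real.log (P.coeff (ind X)) + ∑ j, ((if j ∈ X then 1 else 0) - lam j) * t j := by
          have := hmle X; linarith
      _ ≤ G t := h1
  set C : Set (Fin d → ℝ) := {t | G t ≤ G 0} with hC
  set R : ℝ := max 0 ((G 0 - m) / ε) with hR
  have hbound : ∀ t ∈ C, ‖t‖ ≤ R := by
    intro t ht
    have h1 : m + ε * ∑ j, |t j| ≤ G 0 := le_trans (coercive t) ht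
    have h2 : ∑ j, |t j| ≤ (G 0 - m) / ε := by
      rw [le_div_iff₀ hεpos]; linarith [mul_comm ε (∑ j, |t j|)]
    rw [pi_norm_le_iff_of_nonneg (le_max_left _ _)]
    intro i
    have h3 : |t i| ≤ ∑ j, |t j| :=
      Finset.single_le_sum (fun j _ => abs_nonneg (t j)) (Finset.mem_univ i)
    calc ‖t i‖ = |t i| := rfl
      _ ≤ (G 0 - m) / ε := le_trans h3 h2
      _ ≤ R := le_max_right _ _
  have hC_closed : IsClosed C := isClosed_le hcont continuous_const
  have hC_sub : C ⊆ Metric.closedBall (0 : Fin d → ℝ) R := fun t ht => by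
    rw [Metric.mem_closedBall, dist_zero_right]; exact hbound t ht
  have hC_cpt : IsCompact C :=
    Metric.isCompact_of_isClosed_isBounded hC_closed
      (Metric.isBounded_closedBall.subset hC_sub)
  obtain ⟨τ, hτC, hmin⟩ := hC_cpt.exists_isMinOn ⟨0, le_refl (G 0)⟩ hcont.continuousOn
  have hglobal : ∀ t, G τ ≤ G t := by
    intro t
    by_cases ht : t ∈ C
    · exact hmin ht
    · have h0C : (0 : Fin d → ℝ) ∈ C := le_refl (G 0)
      exact le_trans (hmin h0C) (le_of_lt (not_le.mp ht))
  have hlocal : IsLocalMin G τ := Filter.Eventually.of_forall hglobal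
  have hfd : fderiv ℝ G τ = 0 := hlocal.fderiv_eq_zero
  exact ⟨τ, fun j => by rw [hfd]; rfl⟩

end Exist

section Bdry
open Filter
variable {P : MvPolynomial (Fin d) ℝ}
variable (hpos : ∀ n : Fin d →₀ ℕ, (∀ j, n j ≤ 1) → 0 < P.coeff n)
variable (hzero : ∀ n : Fin d →₀ ℕ, ¬ (∀ j, n j ≤ 1) → P.coeff n = 0)

include hpos hzero in
theorem tendsto_boundary (lam : Fin d → ℝ) (hlam : ∀ j, lam j ∈ Set.Ioo (0:ℝ) 1)
    (ℓ : Fin d → EReal) (hℓ : ∃ j, ℓ j = ⊤ ∨ ℓ j = ⊥) :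
    Tendsto (fun t : Fin d → ℝ => Real.log (expSum P t) - ∑ j, lam j * t j)
      (comap (fun t : Fin d → ℝ => fun j => ((t j : ℝ) : EReal)) (nhds ℓ)) atTop := by
  classical
  set F := comap (fun t : Fin d → ℝ => fun j => ((t j : ℝ) : EReal)) (nhds ℓ) with hF
  set X : Finset (Fin d) := Finset.univ.filter (fun j => ℓ j = ⊤) with hX
  set a : Fin d → ℝ := fun j => (if j ∈ X then 1 else 0) - lam j with ha
  have hbd : ∀ t : Fin d → ℝ, Real.log (P.coeff (ind X)) + ∑ j, a j * t j ≤
      Real.log (expSum P t) - ∑ j, lam j * t j := fun t => log_lower hpos hzero X lam t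
  have hproj : ∀ j, Tendsto (fun t : Fin d → ℝ => ((t j : ℝ) : EReal)) F (nhds (ℓ j)) :=
    fun j => ((continuous_apply j).tendsto ℓ).comp tendsto_comap
  have key : ∀ j, (ℓ j = ⊤ ∨ ℓ j = ⊥) → Tendsto (fun t : Fin d → ℝ => a j * t j) F atTop := by
    intro j hj
    rcases hj with h | h
    · have hjX : j ∈ X := Finset.mem_filter.mpr ⟨Finset.mem_univ j, h⟩
      have haj : a j = 1 - lam j := by rw [ha]; simp [hjX]
      have h1 : Tendsto (fun t : Fin d → ℝ => t j) F atTop := by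
        have h2 := hproj j
        rw [h, EReal.tendsto_nhds_top_iff_real] at h2
        rw [tendsto_atTop]
        intro c
        filter_upwards [h2 c] with t ht
        exact le_of_lt (by exact_mod_cast ht)
      have h3 := Tendsto.const_mul_atTop (show (0:ℝ) < 1 - lam j by linarith [(hlam j).2]) h1
      rw [haj]; exact h3
    · have hjX : j ∉ X := by
        rw [hX]; simp only [Finset.mem_filter]; rintro ⟨-, h'⟩; rw [h] at h'; exact absurd h' (by simp)
      have haj : a j = -lam j := by rw [ha]; simp [hjX]
      have h1 : Tendsto (fun t : Fin d → ℝ => t j) F atBot := by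
        have h2 := hproj j
        rw [h, EReal.tendsto_nhds_bot_iff_real] at h2
        rw [tendsto_atBot]
        intro c
        filter_upwards [h2 c] with t ht
        exact le_of_lt (by exact_mod_cast ht)
      have h2 : Tendsto (fun t : Fin d → ℝ => -(t j)) F atTop :=
        tendsto_neg_atBot_atTop.comp h1
      have h3 := Tendsto.const_mul_atTop (hlam j).1 h2
      have : (fun t : Fin d → ℝ => lam j * -(t j)) = fun t => a j * t j := by
        funext t; rw [haj]; ring
      rwa [this] at h3
  have conv : ∀ j, ¬(ℓ j = ⊤ ∨ ℓ j = ⊥) →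
      ∃ b, Tendsto (fun t : Fin d → ℝ => a j * t j) F (nhds b) := by
    intro j hj
    push_neg at hj
    lift ℓ j to ℝ using ⟨hj.1, hj.2⟩ with c hc
    have h2 := hproj j
    rw [← hc, EReal.tendsto_coe] at h2
    exact ⟨a j * c, h2.const_mul (a j)⟩
  have hlow : ∀ j, ∃ b : ℝ, ∀ᶠ t in F, b ≤ a j * t j := by
    intro j
    by_cases hj : ℓ j = ⊤ ∨ ℓ j = ⊥
    · exact ⟨0, (key j hj).eventually (eventually_ge_atTop 0)⟩
    · obtain ⟨c, hc⟩ := conv j hj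
      exact ⟨c - 1, hc.eventually (eventually_ge_nhds (by linarith))⟩
  choose b hb using hlow
  obtain ⟨j₀, hj₀⟩ := hℓ
  have hev : ∀ᶠ t in F, a j₀ * t j₀ + ∑ j ∈ Finset.univ.erase j₀, b j ≤ ∑ j, a j * t j := by
    filter_upwards [eventually_all.2 hb] with t ht
    rw [← Finset.add_sum_erase Finset.univ (fun j => a j * t j) (Finset.mem_univ j₀)]
    exact add_le_add_right (Finset.sum_le_sum fun j _ => ht j) _
  have hT : Tendsto (fun t : Fin d → ℝ => a j₀ * t j₀ + ∑ j ∈ Finset.univ.erase j₀, b j)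
      F atTop := tendsto_atTop_add_const_right F _ (key j₀ hj₀)
  have hS : Tendsto (fun t : Fin d → ℝ => ∑ j, a j * t j) F atTop :=
    tendsto_atTop_mono' F hev hT
  exact tendsto_atTop_mono hbd (tendsto_atTop_add_const_left F _ hS)

end Bdry
end SqAux


namespace SqAux
variable {d : ℕ} {P : MvPolynomial (Fin d) ℝ}
variable (hpos : ∀ n : Fin d →₀ ℕ, (∀ j, n j ≤ 1) → 0 < P.coeff n)
include hpos

theorem fullRank : PaperStmt.FullRank P := by
  rw [PaperStmt.FullRank, eq_top_iff]
  intro x _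
  have : x = ∑ j, x j • (Pi.single j (1:ℝ) : Fin d → ℝ) := by
    have : ∀ j, x j • (Pi.single j (1:ℝ) : Fin d → ℝ) = Pi.single j (x j) :=
      fun j => by rw [← Pi.single_smul, smul_eq_mul, mul_one]
    rw [funext this, Finset.univ_sum_single]
  rw [this]
  refine Submodule.sum_mem _ fun j _ => Submodule.smul_mem _ _ (Submodule.subset_span ?_)
  refine ⟨Finsupp.single j 1, 0, ne_of_gt (single_coeff_pos hpos j),
    ne_of_gt (zero_coeff_pos hpos), ?_⟩
  funext i
  rw [Finsupp.single_apply]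
  by_cases h : j = i
  · subst h; simp
  · simp [h, Pi.single_apply, Ne.symm h]

theorem aperiodic : PaperStmt.Aperiodic P := by
  intro q hq ⟨p, hp, r, h⟩
  apply hp
  obtain ⟨k0, hk0⟩ := h 0 (ne_of_gt (zero_coeff_pos hpos))
  simp only [Finsupp.coe_zero, Pi.zero_apply, Nat.cast_zero, mul_zero,
    Finset.sum_const_zero] at hk0
  intro j
  obtain ⟨k, hk⟩ := h (Finsupp.single j 1) (ne_of_gt (single_coeff_pos hpos j))
  have hsum : (∑ i, (p i : ℤ) * ((Finsupp.single j 1 : Fin d →₀ ℕ) i : ℤ)) = p j := by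
    rw [Finset.sum_eq_single j]
    · simp
    · intro i _ hij; simp [Finsupp.single_apply, Ne.symm hij]
    · simp
  rw [hsum] at hk
  have : (q:ℤ) ∣ (p j : ℤ) := by
    refine ⟨k - k0, ?_⟩
    have : r = -(q:ℤ) * k0 := by linarith
    rw [hk, this]; ring
  exact_mod_cast this

end SqAux


/-- properties of a polynomial whose monomials are exactly the
square-free monomials `∏_{j∈X} x_j`, each with a strictly positive coefficient. -/
theorem squarefree_positive_polynomial_properties {d : ℕ}
    (P : MvPolynomial (Fin d) ℝ)
    (hpos : ∀ n : Fin d →₀ ℕ, (∀ j, n j ≤ 1) → 0 < P.coeff n)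
    (hzero : ∀ n : Fin d →₀ ℕ, ¬ (∀ j, n j ≤ 1) → P.coeff n = 0)
    (K : (Fin d → ℝ) → ℝ)
    (hK : K = fun t => Real.log (MvPolynomial.eval (fun j => Real.exp (t j)) P)) :
    -- (i) full rank
    FullRank P ∧
    -- (ii) aperiodicity
    Aperiodic P ∧
    -- (iii) for every `λ ∈ (0,1)^d`, `K(t) - λᵀ t → +∞` as `t` tends to any
    -- boundary point of `[-∞,+∞]^d`
    (∀ lam : Fin d → ℝ, (∀ j, lam j ∈ Set.Ioo (0 : ℝ) 1) →
      ∀ ℓ : Fin d → EReal, (∃ j, ℓ j = ⊤ ∨ ℓ j = ⊥) →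
        Filter.Tendsto (fun t : Fin d → ℝ => K t - ∑ j, lam j * t j)
          (Filter.comap (fun t : Fin d → ℝ => fun j => ((t j : ℝ) : EReal)) (nhds ℓ))
          Filter.atTop) ∧
    -- (iv) there is a unique point where the gradient of `K(t) - λᵀ t` vanishes
    (∀ lam : Fin d → ℝ, (∀ j, lam j ∈ Set.Ioo (0 : ℝ) 1) →
      ∃! τ : Fin d → ℝ,
        ∀ j, fderiv ℝ (fun t => K t - ∑ i, lam i * t i) τ (Pi.single j 1) = 0) := by
  subst hK
  refine ⟨SqAux.fullRank hpos, SqAux.aperiodic hpos, ?_, ?_⟩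
  · intro lam hlam ℓ hℓ
    have h := SqAux.tendsto_boundary hpos hzero lam hlam ℓ hℓ
    have he : (fun t : Fin d → ℝ =>
        (fun t : Fin d → ℝ => Real.log (MvPolynomial.eval (fun j => Real.exp (t j)) P)) t
          - ∑ j, lam j * t j)
        = fun t : Fin d → ℝ => Real.log (SqAux.expSum P t) - ∑ j, lam j * t j :=
      funext fun t => by simp only [SqAux.eval_exp]
    rw [he]
    exact h
  · intro lam hlam
    have he : (fun t : Fin d → ℝ =>
        (fun t : Fin d → ℝ => Real.log (MvPolynomial.eval (fun j => Real.exp (t j)) P)) t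
          - ∑ i, lam i * t i)
        = fun t : Fin d → ℝ => Real.log (SqAux.expSum P t) - ∑ i, lam i * t i :=
      funext fun t => by simp only [SqAux.eval_exp]
    rw [he]
    rcases Nat.eq_zero_or_pos d with hd | hd
    · refine ⟨fun _ => 0, fun j => absurd j.isLt (by omega), fun y _ => funext fun j =>
        absurd j.isLt (by omega)⟩
    · obtain ⟨τ, hτ⟩ := SqAux.exists_crit hpos hzero hd lam hlam
      exact ⟨τ, hτ, fun y hy => SqAux.unique_crit hpos hzero lam y τ hy hτ⟩
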